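/- In the two-agent, two-state log-utility belief reporting game with the symmetric linear opinion pool and beliefs p_a < p_b ≤ 1/2, the profile (ρ_a, ρ_b) = (0, 2p_b) is a pure Nash equilibrium. -/
import Mathlib


/-- Two-state log payoff with convention `0 · ln 0 = 0`. -/
noncomputable def pay2 (p x : ℝ) : EReal :=
  (if x = 0 ∧ p ≠ 0 then (⊥ : EReal) else ((p * Real.log x : ℝ) : EReal)) +
  (if x = 1 ∧ p ≠ 1 then (⊥ : EReal) else (((1 - p) * Real.log (1 - x) : ℝ) : EReal))

lemma pay2_eq (p x : ℝ) (h0 : x ≠ 0) (h1 : x ≠ 1) :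
    pay2 p x = ((p * Real.log x + (1 - p) * Real.log (1 - x) : ℝ) : EReal) := by
  simp [pay2, h0, h1, EReal.coe_add]

lemma key (p q x : ℝ) (hq0 : 0 < q) (hq1 : q < 1) (hx0 : 0 < x) (hx1 : x < 1)
    (hp0 : 0 ≤ p) (hp1 : p ≤ 1) (hmono : (x - q) * (p - q) ≤ 0) :
    p * Real.log x + (1 - p) * Real.log (1 - x) ≤
      p * Real.log q + (1 - p) * Real.log (1 - q) := by
  have h1 : Real.log x - Real.log q ≤ (x - q) / q := by
    have := Real.log_le_sub_one_of_pos (x := x / q) (by positivity)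
    rw [Real.log_div (ne_of_gt hx0) (ne_of_gt hq0)] at this
    calc Real.log x - Real.log q ≤ x / q - 1 := this
      _ = (x - q) / q := by rw [div_sub_one (ne_of_gt hq0)]
  have h2 : Real.log (1 - x) - Real.log (1 - q) ≤ (q - x) / (1 - q) := by
    have := Real.log_le_sub_one_of_pos (x := (1 - x) / (1 - q)) (by
      apply div_pos <;> linarith)
    rw [Real.log_div (by linarith) (by linarith)] at this
    calc Real.log (1 - x) - Real.log (1 - q) ≤ (1 - x) / (1 - q) - 1 := this
      _ = (q - x) / (1 - q) := by
        rw [div_sub_one (by linarith : (1:ℝ) - q ≠ 0)]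
        ring_nf
  have hA : p * (Real.log x - Real.log q) ≤ p * ((x - q) / q) :=
    mul_le_mul_of_nonneg_left h1 hp0
  have hB : (1 - p) * (Real.log (1 - x) - Real.log (1 - q)) ≤
      (1 - p) * ((q - x) / (1 - q)) :=
    mul_le_mul_of_nonneg_left h2 (by linarith)
  have hsum : (p * ((x - q) / q) + (1 - p) * ((q - x) / (1 - q))) * (q * (1 - q)) =
      (x - q) * (p - q) := by
    have hq' : q ≠ 0 := ne_of_gt hq0
    have h1q : (1:ℝ) - q ≠ 0 := by linarith
    field_simp
    ring
  have hpos : 0 < q * (1 - q) := mul_pos hq0 (by linarith)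
  have hsle : p * ((x - q) / q) + (1 - p) * ((q - x) / (1 - q)) ≤ 0 := by
    nlinarith [hsum, hmono, hpos]
  linarith [hA, hB]

/-- with beliefs `0 ≤ pa < pb ≤ 1/2`, the profile `(0, 2 pb)` is a
pure Nash equilibrium of the two-agent, two-state log-utility reporting game. -/
theorem stmt3 (pa pb : ℝ) (hpa : 0 ≤ pa) (hab : pa < pb) (hpb : pb ≤ 1 / 2) :
    IsMaxOn (fun r => pay2 pa ((r + 2 * pb) / 2)) (Set.Icc (0:ℝ) 1) 0 ∧
    IsMaxOn (fun r => pay2 pb ((0 + r) / 2)) (Set.Icc (0:ℝ) 1) (2 * pb) := by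
  have hpb0 : 0 < pb := lt_of_le_of_lt hpa hab
  have hpb1 : pb < 1 := by linarith
  constructor
  · intro r hr
    simp only [Set.mem_Icc] at hr
    simp only [Set.mem_setOf_eq]
    have h0 : (0 + 2 * pb) / 2 = pb := by ring
    rw [h0, pay2_eq pa pb (ne_of_gt hpb0) (ne_of_lt hpb1)]
    set x := (r + 2 * pb) / 2 with hxdef
    have hx0 : 0 < x := by rw [hxdef]; linarith
    by_cases hx1 : x = 1
    · have : pay2 pa x = ⊥ := by
        simp [pay2, hx1, show pa ≠ 1 by linarith]
      rw [this]; exact bot_le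
    · have hx1' : x < 1 := lt_of_le_of_ne (by rw [hxdef]; linarith) hx1
      rw [pay2_eq pa x (ne_of_gt hx0) hx1]
      rw [EReal.coe_le_coe_iff]
      exact key pa pb x hpb0 hpb1 hx0 hx1' hpa (by linarith)
        (mul_nonpos_of_nonneg_of_nonpos (by rw [hxdef]; linarith) (by linarith))
  · intro r hr
    simp only [Set.mem_Icc] at hr
    simp only [Set.mem_setOf_eq]
    have h0 : (0 + 2 * pb) / 2 = pb := by ring
    rw [h0, pay2_eq pb pb (ne_of_gt hpb0) (ne_of_lt hpb1)]
    set x := (0 + r) / 2 with hxdef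
    by_cases hx0 : x = 0
    · have : pay2 pb x = ⊥ := by
        simp [pay2, hx0, ne_of_gt hpb0]
      rw [this]; exact bot_le
    · have hx0' : 0 < x := lt_of_le_of_ne (by rw [hxdef]; linarith) (Ne.symm hx0)
      have hx1 : x < 1 := by rw [hxdef]; linarith
      rw [pay2_eq pb x (ne_of_gt hx0') (ne_of_lt hx1)]
      rw [EReal.coe_le_coe_iff]
      exact key pb pb x hpb0 hpb1 hx0' hx1 (le_of_lt hpb0) (by linarith)
        (by simp)
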